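/- Let S be a measurable space, κ a Markov kernel from S to S, ρ₀ a probability measure on S, and γ ∈ ℝ≥0∞ with γ < 1. Define measures μ_t on S by μ₀ = ρ₀ and μ_{t+1} = μ_t.bind κ, and let d = ∑_{t=0}^{∞} ((1−γ)·γ^t) • μ_t. Define the restart kernel κ_γ from S to S by κ_γ(s) = (1−γ) • ρ₀ + γ • κ(s). Then d is a probability measure on S and d is invariant for the restart kernel: d.bind κ_γ = d. -/

import Mathlib

open MeasureTheory ProbabilityTheory
open scoped ENNReal

theorem stmt_16 (S : Type*) [MeasurableSpace S]
    (κ : Kernel S S) [IsMarkovKernel κ]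
    (ρ₀ : Measure S) [IsProbabilityMeasure ρ₀]
    (γ : ℝ≥0∞) (hγ : γ < 1)
    (μ : ℕ → Measure S) (hμ0 : μ 0 = ρ₀)
    (hμ : ∀ t, μ (t + 1) = (μ t).bind κ)
    (d : Measure S) (hd : d = Measure.sum (fun t => ((1 - γ) * γ ^ t) • μ t)) :
    IsProbabilityMeasure d ∧
      d.bind (fun s => (1 - γ) • ρ₀ + γ • κ s) = d := by
  have hγ1 : (1 : ℝ≥0∞) - γ ≠ 0 := by
    simpa [tsub_eq_zero_iff_le] using hγ.not_ge
  -- each μ t is a probability measure (univ mass 1)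
  have hprob : ∀ t, μ t Set.univ = 1 := by
    intro t
    induction t with
    | zero => simp [hμ0]
    | succ t ih =>
      rw [hμ t, Measure.bind_apply MeasurableSet.univ κ.measurable.aemeasurable]
      simp [ih]
  have hdapply : ∀ A : Set S, MeasurableSet A →
      d A = ∑' t, (1 - γ) * γ ^ t * μ t A := by
    intro A hA
    rw [hd, Measure.sum_apply _ hA]
    simp [Measure.smul_apply]
  have hduniv : d Set.univ = 1 := by
    rw [hdapply Set.univ MeasurableSet.univ]
    simp only [hprob, mul_one]
    rw [ENNReal.tsum_mul_left, ENNReal.tsum_geometric,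
      ENNReal.mul_inv_cancel hγ1 (by simp : (1 : ℝ≥0∞) - γ ≠ ∞)]
  have hP : IsProbabilityMeasure d := ⟨hduniv⟩
  refine ⟨hP, ?_⟩
  -- measurability of the restart kernel
  have hmeas : Measurable (fun s => (1 - γ) • ρ₀ + γ • κ s) := by
    apply Measure.measurable_of_measurable_coe
    intro B hB
    simp only [Measure.add_apply, Measure.smul_apply, smul_eq_mul]
    exact (measurable_const.add ((κ.measurable_coe hB).const_mul _))
  ext A hA
  rw [Measure.bind_apply hA hmeas.aemeasurable]
  have heval : ∀ s : S, ((1 - γ) • ρ₀ + γ • κ s) A = (1 - γ) * ρ₀ A + γ * κ s A := by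
    intro s; simp [Measure.add_apply, Measure.smul_apply, smul_eq_mul]
  simp only [heval]
  rw [lintegral_add_left (by simp) , lintegral_const, lintegral_const_mul _ (Kernel.measurable_coe κ hA), hduniv, mul_one]
  have hbind : ∫⁻ a, κ a A ∂d = ∑' t, (1 - γ) * γ ^ t * μ (t + 1) A := by
    rw [hd, lintegral_sum_measure]
    congr 1; funext t
    rw [lintegral_smul_measure, hμ t,
      Measure.bind_apply hA κ.measurable.aemeasurable, smul_eq_mul]
  rw [hbind, hdapply A hA]
  conv_rhs => rw [tsum_eq_zero_add' ENNReal.summable]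
  rw [pow_zero, mul_one, hμ0]
  congr 1
  rw [← ENNReal.tsum_mul_left]
  congr 1; funext t; ring
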